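/- arXiv:2203.06554 — 3 statements merged into one kernel-verified Lean document; each statement's English description precedes it below -/
import Mathlib

section
/- Let {M_{sp}}_{(s,p)∈S×P} be a POVM on ℂ^d and set M_p := ∑_{s∈S} M_{sp}. Then the following two conditions are equivalent. (A) There exist a finite index set Λ and nonzero pairwise-orthogonal orthogonal projections {P_λ}_{λ∈Λ} on ℂ^d with ∑_{λ∈Λ} P_λ = 𝟙 such that (1) every M_{sp} is block diagonal along the decomposition, i.e. P_λ·M_{sp} = M_{sp}·P_λ for all (s,p) ∈ S×P and λ ∈ Λ, and (2) for every p ∈ P and λ ∈ Λ there is a constant c_{p,λ} ∈ [0,1] with P_λ·M_p·P_λ = c_{p,λ}·P_λ. (B) M_{sp}·M_{p'} = M_{p'}·M_{sp} for all s ∈ S and all p, p' ∈ P. -/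
open Matrix
open scoped ComplexOrder

namespace Stmt0Aux
open scoped Classical

variable {d : ℕ} {A : Matrix (Fin d) (Fin d) ℂ}

/-- conjugated diagonal matrix w.r.t. the eigenbasis of a hermitian matrix -/
noncomputable def cdiag (hA : A.IsHermitian) (f : Fin d → ℂ) : Matrix (Fin d) (Fin d) ℂ :=
  (hA.eigenvectorUnitary : Matrix (Fin d) (Fin d) ℂ) * Matrix.diagonal f *
    star (hA.eigenvectorUnitary : Matrix (Fin d) (Fin d) ℂ)

variable (hA : A.IsHermitian)

lemma star_mul_selfU : star (hA.eigenvectorUnitary : Matrix (Fin d) (Fin d) ℂ) *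
    (hA.eigenvectorUnitary : Matrix (Fin d) (Fin d) ℂ) = 1 :=
  Matrix.mem_unitaryGroup_iff'.mp (hA.eigenvectorUnitary).2

lemma mul_self_starU : (hA.eigenvectorUnitary : Matrix (Fin d) (Fin d) ℂ) *
    star (hA.eigenvectorUnitary : Matrix (Fin d) (Fin d) ℂ) = 1 :=
  Matrix.mem_unitaryGroup_iff.mp (hA.eigenvectorUnitary).2

lemma cdiag_mul (f g : Fin d → ℂ) : cdiag hA f * cdiag hA g = cdiag hA (f * g) := by
  have collapse : ∀ X : Matrix (Fin d) (Fin d) ℂ,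
      star (hA.eigenvectorUnitary : Matrix (Fin d) (Fin d) ℂ) *
        ((hA.eigenvectorUnitary : Matrix (Fin d) (Fin d) ℂ) * X) = X := by
    intro X; rw [← mul_assoc, star_mul_selfU hA, one_mul]
  simp only [cdiag, mul_assoc, collapse]
  rw [← mul_assoc (Matrix.diagonal f), Matrix.diagonal_mul_diagonal]
  rfl

lemma cdiag_one : cdiag hA 1 = 1 := by
  rw [cdiag, show Matrix.diagonal (1 : Fin d → ℂ) = 1 from Matrix.diagonal_one,
    mul_one, mul_self_starU hA]

lemma cdiag_zero : cdiag hA 0 = 0 := by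
  rw [cdiag, show Matrix.diagonal (0 : Fin d → ℂ) = 0 from Matrix.diagonal_zero,
    mul_zero, zero_mul]

lemma cdiag_sum {ι : Type*} (t : Finset ι) (f : ι → Fin d → ℂ) :
    cdiag hA (∑ i ∈ t, f i) = ∑ i ∈ t, cdiag hA (f i) := by
  unfold cdiag
  rw [show Matrix.diagonal (∑ i ∈ t, f i) = ∑ i ∈ t, Matrix.diagonal (f i) from
    map_sum (Matrix.diagonalAddMonoidHom (Fin d) ℂ) f t, Finset.mul_sum, Finset.sum_mul]

lemma cdiag_smul (c : ℂ) (f : Fin d → ℂ) : cdiag hA (c • f) = c • cdiag hA f := by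
  unfold cdiag
  rw [Matrix.diagonal_smul, Matrix.mul_smul, Matrix.smul_mul]

lemma cdiag_conjTranspose (f : Fin d → ℂ) : (cdiag hA f)ᴴ = cdiag hA (star f) := by
  simp only [cdiag, Matrix.star_eq_conjTranspose, Matrix.conjTranspose_mul,
    Matrix.conjTranspose_conjTranspose, Matrix.diagonal_conjTranspose, mul_assoc]

lemma cdiag_eigen : cdiag hA (fun i => (hA.eigenvalues i : ℂ)) = A := by
  rw [cdiag]
  exact (hA.spectral_theorem).symm

/-- spectral projection of a hermitian matrix at the value `μ` -/
noncomputable def sproj (hA : A.IsHermitian) (μ : ℝ) : Matrix (Fin d) (Fin d) ℂ :=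
  cdiag hA (fun i => if hA.eigenvalues i = μ then 1 else 0)

lemma sproj_mul_sproj (μ ν : ℝ) :
    sproj hA μ * sproj hA ν = if μ = ν then sproj hA μ else 0 := by
  unfold sproj
  rw [cdiag_mul]
  by_cases h : μ = ν
  · subst h
    rw [if_pos rfl]
    have heq : ((fun i => if hA.eigenvalues i = μ then (1:ℂ) else 0) *
        (fun i => if hA.eigenvalues i = μ then (1:ℂ) else 0))
        = (fun i => if hA.eigenvalues i = μ then (1:ℂ) else 0) := by
      funext i
      by_cases h1 : hA.eigenvalues i = μ <;> simp [h1]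
    rw [heq]
  · rw [if_neg h]
    have heq : ((fun i => if hA.eigenvalues i = μ then (1:ℂ) else 0) *
        (fun i => if hA.eigenvalues i = ν then (1:ℂ) else 0)) = 0 := by
      funext i
      by_cases h1 : hA.eigenvalues i = μ
      · have h2 : hA.eigenvalues i ≠ ν := fun hh => h (by rw [← h1, hh])
        simp [h1, h2, h]
      · simp [h1]
    rw [heq, cdiag_zero]

lemma sproj_idem (μ : ℝ) : sproj hA μ * sproj hA μ = sproj hA μ := by
  rw [sproj_mul_sproj, if_pos rfl]

lemma sproj_orth {μ ν : ℝ} (h : μ ≠ ν) : sproj hA μ * sproj hA ν = 0 := by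
  rw [sproj_mul_sproj, if_neg h]

lemma sproj_conjTranspose (μ : ℝ) : (sproj hA μ)ᴴ = sproj hA μ := by
  unfold sproj
  rw [cdiag_conjTranspose]
  have heq : (star fun i => if hA.eigenvalues i = μ then (1:ℂ) else 0)
      = (fun i => if hA.eigenvalues i = μ then (1:ℂ) else 0) := by
    funext i
    by_cases h : hA.eigenvalues i = μ <;> simp [h]
  rw [heq]

lemma sum_sproj : ∑ μ ∈ Finset.image hA.eigenvalues Finset.univ, sproj hA μ = 1 := by
  unfold sproj
  rw [← cdiag_sum, ← cdiag_one hA]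
  have heq : (∑ μ ∈ Finset.image hA.eigenvalues Finset.univ,
      fun i => if hA.eigenvalues i = μ then (1:ℂ) else 0) = (1 : Fin d → ℂ) := by
    funext i
    simp only [Finset.sum_apply, Pi.one_apply]
    rw [Finset.sum_ite_eq (Finset.image hA.eigenvalues Finset.univ) (hA.eigenvalues i)
      (fun _ => (1:ℂ)), if_pos (Finset.mem_image_of_mem _ (Finset.mem_univ i))]
  rw [heq]

lemma mul_sproj (μ : ℝ) : A * sproj hA μ = (μ : ℂ) • sproj hA μ := by
  unfold sproj
  rw [show A * cdiag hA (fun i => if hA.eigenvalues i = μ then 1 else 0)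
      = cdiag hA (fun i => (hA.eigenvalues i : ℂ)) *
        cdiag hA (fun i => if hA.eigenvalues i = μ then 1 else 0) from by rw [cdiag_eigen],
    cdiag_mul, ← cdiag_smul]
  have heq : ((fun i => (hA.eigenvalues i : ℂ)) *
      (fun i => if hA.eigenvalues i = μ then (1:ℂ) else 0))
      = (μ:ℂ) • (fun i => if hA.eigenvalues i = μ then (1:ℂ) else 0) := by
    funext i
    by_cases h : hA.eigenvalues i = μ <;> simp [h]
  rw [heq]

lemma sproj_mul (μ : ℝ) : sproj hA μ * A = (μ : ℂ) • sproj hA μ := by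
  unfold sproj
  rw [show cdiag hA (fun i => if hA.eigenvalues i = μ then 1 else 0) * A
      = cdiag hA (fun i => if hA.eigenvalues i = μ then 1 else 0) *
        cdiag hA (fun i => (hA.eigenvalues i : ℂ)) from by rw [cdiag_eigen],
    cdiag_mul, ← cdiag_smul]
  have heq : ((fun i => if hA.eigenvalues i = μ then (1:ℂ) else 0) *
      (fun i => (hA.eigenvalues i : ℂ)))
      = (μ:ℂ) • (fun i => if hA.eigenvalues i = μ then (1:ℂ) else 0) := by
    funext i
    by_cases h : hA.eigenvalues i = μ <;> simp [h]
  rw [heq]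

lemma spectral_sum : ∑ μ ∈ Finset.image hA.eigenvalues Finset.univ,
    (μ : ℂ) • sproj hA μ = A := by
  conv_rhs => rw [← cdiag_eigen hA]
  simp only [sproj, ← cdiag_smul]
  rw [← cdiag_sum]
  have heq : (∑ μ ∈ Finset.image hA.eigenvalues Finset.univ,
      (μ:ℂ) • fun i => if hA.eigenvalues i = μ then (1:ℂ) else 0)
      = (fun i => (hA.eigenvalues i : ℂ)) := by
    funext i
    simp only [Finset.sum_apply, Pi.smul_apply, smul_eq_mul]
    have hterm : ∀ μ ∈ Finset.image hA.eigenvalues Finset.univ,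
        (μ:ℂ) * (if hA.eigenvalues i = μ then (1:ℂ) else 0)
        = (if hA.eigenvalues i = μ then (μ:ℂ) else 0) := by
      intro μ _
      by_cases h : hA.eigenvalues i = μ <;> simp [h]
    rw [Finset.sum_congr rfl hterm,
      Finset.sum_ite_eq (Finset.image hA.eigenvalues Finset.univ) (hA.eigenvalues i)
        (fun μ => (μ:ℂ)), if_pos (Finset.mem_image_of_mem _ (Finset.mem_univ i))]
  rw [heq]

lemma commute_sproj {B : Matrix (Fin d) (Fin d) ℂ} (hAB : A * B = B * A) (μ : ℝ) :
    B * sproj hA μ = sproj hA μ * B := by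
  have key : ∀ ν₁ ν₂ : ℝ, ν₁ ≠ ν₂ → sproj hA ν₁ * B * sproj hA ν₂ = 0 := by
    intro ν₁ ν₂ hne
    have h1 : (ν₁ : ℂ) • (sproj hA ν₁ * B * sproj hA ν₂)
        = (ν₂ : ℂ) • (sproj hA ν₁ * B * sproj hA ν₂) := by
      calc (ν₁ : ℂ) • (sproj hA ν₁ * B * sproj hA ν₂)
          = ((ν₁ : ℂ) • sproj hA ν₁) * B * sproj hA ν₂ := by
            rw [smul_mul_assoc, smul_mul_assoc]
        _ = sproj hA ν₁ * A * B * sproj hA ν₂ := by rw [sproj_mul]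
        _ = sproj hA ν₁ * (A * B) * sproj hA ν₂ := by rw [mul_assoc (sproj hA ν₁)]
        _ = sproj hA ν₁ * (B * A) * sproj hA ν₂ := by rw [hAB]
        _ = sproj hA ν₁ * B * (A * sproj hA ν₂) := by
            rw [← mul_assoc, mul_assoc (sproj hA ν₁ * B)]
        _ = sproj hA ν₁ * B * ((ν₂ : ℂ) • sproj hA ν₂) := by rw [mul_sproj]
        _ = (ν₂ : ℂ) • (sproj hA ν₁ * B * sproj hA ν₂) := by rw [mul_smul_comm]
    have h2 : ((ν₁ : ℂ) - (ν₂ : ℂ)) • (sproj hA ν₁ * B * sproj hA ν₂) = 0 := by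
      rw [sub_smul, h1, sub_self]
    have h3 : ((ν₁ : ℂ) - (ν₂ : ℂ)) ≠ 0 := by
      simpa [sub_eq_zero] using fun hh => hne (by exact_mod_cast hh)
    rcases smul_eq_zero.mp h2 with h | h
    · exact absurd h h3
    · exact h
  set T := Finset.image hA.eigenvalues Finset.univ with hT
  by_cases hμ : μ ∈ T
  · have e1 : B * sproj hA μ = ∑ ν ∈ T, sproj hA ν * B * sproj hA μ := by
      calc B * sproj hA μ = 1 * (B * sproj hA μ) := by rw [one_mul]
        _ = (∑ ν ∈ T, sproj hA ν) * (B * sproj hA μ) := by rw [sum_sproj]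
        _ = ∑ ν ∈ T, sproj hA ν * (B * sproj hA μ) := by rw [Finset.sum_mul]
        _ = ∑ ν ∈ T, sproj hA ν * B * sproj hA μ := by
            exact Finset.sum_congr rfl fun ν _ => by rw [mul_assoc]
    have e2 : sproj hA μ * B = ∑ ν ∈ T, sproj hA μ * B * sproj hA ν := by
      calc sproj hA μ * B = sproj hA μ * B * 1 := by rw [mul_one]
        _ = sproj hA μ * B * (∑ ν ∈ T, sproj hA ν) := by rw [sum_sproj]
        _ = ∑ ν ∈ T, sproj hA μ * B * sproj hA ν := by rw [Finset.mul_sum]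
    rw [e1, e2, Finset.sum_eq_single μ (fun ν _ hν => key ν μ hν) (fun h => absurd hμ h),
      Finset.sum_eq_single μ (fun ν _ hν => key μ ν fun hh => hν hh.symm) (fun h => absurd hμ h)]
  · have hz : sproj hA μ = 0 := by
      unfold sproj
      have heq : (fun i => if hA.eigenvalues i = μ then (1:ℂ) else 0) = 0 := by
        funext i
        have : hA.eigenvalues i ≠ μ := fun hh =>
          hμ (hT ▸ (hh ▸ Finset.mem_image_of_mem _ (Finset.mem_univ i)))
        simp [this]
      rw [heq, cdiag_zero]
    rw [hz, mul_zero, zero_mul]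

lemma psd_sum {ι : Type*} (t : Finset ι) (f : ι → Matrix (Fin d) (Fin d) ℂ)
    (hf : ∀ i ∈ t, (f i).PosSemidef) : (∑ i ∈ t, f i).PosSemidef := by
  classical
  induction t using Finset.induction_on with
  | empty => simpa using Matrix.PosSemidef.zero
  | insert a s hx ih =>
    rw [Finset.sum_insert hx]
    exact (hf a (Finset.mem_insert_self a s)).add
      (ih fun i hi => hf i (Finset.mem_insert_of_mem hi))

lemma eig_le_one (h1 : (1 - A).PosSemidef) (i : Fin d) : hA.eigenvalues i ≤ 1 := by
  have h := h1.re_dotProduct_nonneg ⇑(hA.eigenvectorBasis i)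
  rw [Matrix.sub_mulVec, Matrix.one_mulVec, dotProduct_sub, map_sub] at h
  have h2 : RCLike.re (dotProduct (star ⇑(hA.eigenvectorBasis i))
      ⇑(hA.eigenvectorBasis i)) = 1 := by
    rw [show dotProduct (star ⇑(hA.eigenvectorBasis i)) ⇑(hA.eigenvectorBasis i)
        = (inner ℂ (hA.eigenvectorBasis i) (hA.eigenvectorBasis i) : ℂ) from by
          rw [EuclideanSpace.inner_eq_star_dotProduct, dotProduct_comm],
      @inner_self_eq_norm_sq_to_K ℂ]
    rw [hA.eigenvectorBasis.orthonormal.1 i]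
    simp
  rw [h2, ← hA.eigenvalues_eq i] at h
  linarith

lemma real_smul_matrix (r : ℝ) (X : Matrix (Fin d) (Fin d) ℂ) :
    r • X = (r : ℂ) • X := by
  ext i j
  simp [Matrix.smul_apply, Complex.real_smul]

end Stmt0Aux
set_option maxHeartbeats 1000000 in
open Stmt0Aux in
/-- For a POVM `{M s p}` on `ℂ^d`, with `M_p := ∑ s, M s p`, the existence of a
finite family of nonzero pairwise-orthogonal orthogonal projections summing to the identity,
commuting with every `M s p`, and compressing every `M_p` to a scalar multiple of the projection,
is equivalent to the commutation relations `M_{sp} · M_{p'} = M_{p'} · M_{sp}`. -/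
theorem stmt_0 {d : ℕ} (hd : 1 ≤ d) {S P : Type*}
    [Fintype S] [Nonempty S] [Fintype P] [Nonempty P]
    (M : S → P → Matrix (Fin d) (Fin d) ℂ)
    (hMpsd : ∀ s p, (M s p).PosSemidef)
    (hMsum : ∑ s : S, ∑ p : P, M s p = 1) :
    (∃ (k : ℕ) (Pr : Fin k → Matrix (Fin d) (Fin d) ℂ),
        (∀ l, Pr l ≠ 0) ∧
        (∀ l, (Pr l).IsHermitian) ∧
        (∀ l, Pr l * Pr l = Pr l) ∧
        (∀ l l', l ≠ l' → Pr l * Pr l' = 0) ∧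
        (∑ l, Pr l = 1) ∧
        (∀ s p l, Pr l * M s p = M s p * Pr l) ∧
        (∀ p l, ∃ c : ℝ, 0 ≤ c ∧ c ≤ 1 ∧
          Pr l * (∑ s : S, M s p) * Pr l = (c : ℂ) • Pr l)) ↔
      (∀ (s : S) (p p' : P),
        M s p * (∑ s' : S, M s' p') = (∑ s' : S, M s' p') * M s p) := by
  classical
  constructor
  · -- easy direction
    rintro ⟨k, Pr, hne, hherm, hidem, horth, hsum, hcommPr, hcompr⟩ s p p'
    choose c hc0 hc1 hcl using hcompr p'
    have hcommMp : ∀ l, (∑ s' : S, M s' p') * Pr l = Pr l * (∑ s' : S, M s' p') := by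
      intro l
      rw [Finset.sum_mul, Finset.mul_sum]
      exact Finset.sum_congr rfl fun s' _ => (hcommPr s' p' l).symm
    have hMp' : (∑ s' : S, M s' p') = ∑ l, (c l : ℂ) • Pr l := by
      calc (∑ s' : S, M s' p')
          = (∑ l, Pr l) * (∑ s' : S, M s' p') * (∑ l', Pr l') := by
            rw [hsum, one_mul, mul_one]
        _ = ∑ l, ∑ l', Pr l * (∑ s' : S, M s' p') * Pr l' := by
            rw [Finset.sum_mul, Finset.sum_mul]
            exact Finset.sum_congr rfl fun l _ => Finset.mul_sum _ _ _
        _ = ∑ l, (c l : ℂ) • Pr l := by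
            refine Finset.sum_congr rfl fun l _ => ?_
            rw [Finset.sum_eq_single l (fun l' _ hl' => ?_)
              (fun h => absurd (Finset.mem_univ l) h)]
            · exact hcl l
            · rw [mul_assoc, hcommMp l', ← mul_assoc, horth l l' (Ne.symm hl'), zero_mul]
    rw [hMp', Finset.mul_sum, Finset.sum_mul]
    refine Finset.sum_congr rfl fun l _ => ?_
    rw [mul_smul_comm, smul_mul_assoc, hcommPr s p l]
  · -- hard direction
    intro hB
    have hMpherm : ∀ p : P, (∑ s : S, M s p).IsHermitian := by
      intro p
      unfold Matrix.IsHermitian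
      rw [Matrix.conjTranspose_sum]
      exact Finset.sum_congr rfl fun s _ => (hMpsd s p).1
    have hMpPSD : ∀ p, (∑ s : S, M s p).PosSemidef := fun p =>
      psd_sum _ _ fun s _ => hMpsd s p
    have hMpsum : ∑ p : P, ∑ s : S, M s p = 1 := by rw [← hMsum]; exact Finset.sum_comm
    have honeSub : ∀ p, ((1 : Matrix (Fin d) (Fin d) ℂ) - ∑ s : S, M s p).PosSemidef := by
      intro p
      have he : (1 : Matrix (Fin d) (Fin d) ℂ) - (∑ s : S, M s p)
          = ∑ q ∈ Finset.univ.erase p, ∑ s : S, M s q := by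
        rw [← hMpsum, ← Finset.add_sum_erase _ _ (Finset.mem_univ p), add_sub_cancel_left]
      rw [he]
      exact psd_sum _ _ fun q _ => hMpPSD q
    have hBc : ∀ s p q, (∑ s' : S, M s' q) * M s p = M s p * (∑ s' : S, M s' q) :=
      fun s p q => (hB s p q).symm
    have hME : ∀ s p q (ν : ℝ), M s p * sproj (hMpherm q) ν = sproj (hMpherm q) ν * M s p :=
      fun s p q ν => commute_sproj (hMpherm q) (hBc s p q) ν
    have hMpE : ∀ p q (ν : ℝ), (∑ s : S, M s p) * sproj (hMpherm q) ν
        = sproj (hMpherm q) ν * (∑ s : S, M s p) := by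
      intro p q ν
      rw [Finset.sum_mul, Finset.mul_sum]
      exact Finset.sum_congr rfl fun s _ => hME s p q ν
    have hEE : ∀ p (μ : ℝ) q (ν : ℝ), sproj (hMpherm p) μ * sproj (hMpherm q) ν
        = sproj (hMpherm q) ν * sproj (hMpherm p) μ :=
      fun p μ q ν => commute_sproj (hMpherm q) (hMpE q p μ) ν
    -- the commutative algebra generated by all spectral projections
    set gens : Set (Matrix (Fin d) (Fin d) ℂ) :=
      Set.range (fun pμ : P × ℝ => sproj (hMpherm pμ.1) pμ.2) with hgensdef
    have hgens : ∀ a ∈ gens, ∀ b ∈ gens, a * b = b * a := by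
      rintro a ⟨⟨p, μ⟩, rfl⟩ b ⟨⟨q, ν⟩, rfl⟩
      exact hEE p μ q ν
    letI : CommRing (Algebra.adjoin ℝ gens) := Algebra.adjoinCommRingOfComm ℝ hgens
    let Eh : P → ℝ → Algebra.adjoin ℝ gens := fun p μ =>
      ⟨sproj (hMpherm p) μ, Algebra.subset_adjoin ⟨(p, μ), rfl⟩⟩
    have coe_mul : ∀ x y : Algebra.adjoin ℝ gens, (x * y).val = x.val * y.val :=
      fun _ _ => rfl
    have coe_one : (1 : Algebra.adjoin ℝ gens).val = 1 := rfl
    have coe_zero : (0 : Algebra.adjoin ℝ gens).val = 0 := rfl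
    have coe_algebraMap : ∀ r : ℝ, (algebraMap ℝ (Algebra.adjoin ℝ gens) r).val
        = algebraMap ℝ (Matrix (Fin d) (Fin d) ℂ) r := fun _ => rfl
    have coe_sumR : ∀ (t : Finset ℝ) (f : ℝ → Algebra.adjoin ℝ gens),
        (∑ i ∈ t, f i).val = ∑ i ∈ t, (f i).val := by
      intro t f
      induction t using Finset.induction_on with
      | empty => rw [Finset.sum_empty, Finset.sum_empty]; rfl
      | insert _ _ hx ih =>
        rw [Finset.sum_insert hx, Finset.sum_insert hx, ← ih]; rfl
    have coe_sumP : ∀ (t : Finset (P → ℝ)) (f : (P → ℝ) → Algebra.adjoin ℝ gens),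
        (∑ i ∈ t, f i).val = ∑ i ∈ t, (f i).val := by
      intro t f
      induction t using Finset.induction_on with
      | empty => rw [Finset.sum_empty, Finset.sum_empty]; rfl
      | insert _ _ hx ih =>
        rw [Finset.sum_insert hx, Finset.sum_insert hx, ← ih]; rfl
    have hEh_idem : ∀ p (μ : ℝ), Eh p μ * Eh p μ = Eh p μ := fun p μ =>
      Subtype.coe_injective ((coe_mul _ _).trans (sproj_idem (hMpherm p) μ))
    have hEh_orth : ∀ p {μ ν : ℝ}, μ ≠ ν → Eh p μ * Eh p ν = 0 := fun p _ _ h =>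
      Subtype.coe_injective ((coe_mul _ _).trans (sproj_orth (hMpherm p) h))
    let T : P → Finset ℝ := fun p => Finset.image (hMpherm p).eigenvalues Finset.univ
    have hEh_sum : ∀ p, ∑ μ ∈ T p, Eh p μ = 1 := by
      intro p
      apply Subtype.coe_injective
      exact (coe_sumR (T p) (fun μ => Eh p μ)).trans (sum_sproj (hMpherm p))
    have algebraMap_mul_val : ∀ (r : ℝ) (x : Algebra.adjoin ℝ gens),
        (algebraMap ℝ (Algebra.adjoin ℝ gens) r * x).val = (r : ℂ) • x.val := by
      intro r x
      rw [coe_mul, coe_algebraMap, Algebra.algebraMap_eq_smul_one, smul_mul_assoc, one_mul,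
        real_smul_matrix]
    have hMh_coe : ∀ p,
        (∑ μ ∈ T p, algebraMap ℝ (Algebra.adjoin ℝ gens) μ * Eh p μ).val = ∑ s : S, M s p := by
      intro p
      refine (coe_sumR (T p) (fun μ => algebraMap ℝ (Algebra.adjoin ℝ gens) μ * Eh p μ)).trans ?_
      refine (Finset.sum_congr rfl (fun μ _ => ?_)).trans (spectral_sum (hMpherm p))
      exact algebraMap_mul_val _ _
    -- facts about the joint projections inside the commutative ring
    have hPh_idem : ∀ γ : P → ℝ, (∏ q : P, Eh q (γ q)) * (∏ q : P, Eh q (γ q))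
        = ∏ q : P, Eh q (γ q) := by
      intro γ
      rw [← Finset.prod_mul_distrib]
      exact Finset.prod_congr rfl fun q _ => hEh_idem q (γ q)
    have hPh_orth : ∀ γ γ' : P → ℝ, γ ≠ γ' →
        (∏ q : P, Eh q (γ q)) * (∏ q : P, Eh q (γ' q)) = 0 := by
      intro γ γ' h
      obtain ⟨p, hp⟩ := Function.ne_iff.mp h
      rw [← Finset.prod_mul_distrib]
      exact Finset.prod_eq_zero (Finset.mem_univ p) (hEh_orth p hp)
    have hPh_absorb : ∀ (γ : P → ℝ) p, (∏ q : P, Eh q (γ q)) * Eh p (γ p)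
        = ∏ q : P, Eh q (γ q) := by
      intro γ p
      rw [← Finset.mul_prod_erase Finset.univ (fun q => Eh q (γ q)) (Finset.mem_univ p),
        mul_right_comm, hEh_idem]
    have hPh_kill : ∀ (γ : P → ℝ) p (μ : ℝ), μ ≠ γ p →
        (∏ q : P, Eh q (γ q)) * Eh p μ = 0 := by
      intro γ p μ h
      rw [← Finset.mul_prod_erase Finset.univ (fun q => Eh q (γ q)) (Finset.mem_univ p),
        mul_right_comm, hEh_orth p (Ne.symm h), zero_mul]
    have hPh_sum : ∑ γ ∈ Fintype.piFinset T, ∏ q : P, Eh q (γ q) = 1 := by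
      rw [← Finset.prod_univ_sum, Finset.prod_congr rfl fun p _ => hEh_sum p,
        Finset.prod_const_one]
    have hPh_comp : ∀ γ ∈ Fintype.piFinset T, ∀ p : P,
        (∏ q : P, Eh q (γ q)) * (∑ μ ∈ T p, algebraMap ℝ (Algebra.adjoin ℝ gens) μ * Eh p μ)
            * (∏ q : P, Eh q (γ q))
          = algebraMap ℝ (Algebra.adjoin ℝ gens) (γ p) * ∏ q : P, Eh q (γ q) := by
      intro γ hγ p
      have hmem : γ p ∈ T p := Fintype.mem_piFinset.mp hγ p
      rw [Finset.mul_sum, Finset.sum_mul,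
        Finset.sum_eq_single (γ p) (fun μ _ hμ => ?_) (fun h => absurd hmem h)]
      · rw [mul_left_comm (∏ q : P, Eh q (γ q)) (algebraMap ℝ (Algebra.adjoin ℝ gens) (γ p))
            (Eh p (γ p)), hPh_absorb,
          mul_assoc (algebraMap ℝ (Algebra.adjoin ℝ gens) (γ p)), hPh_idem]
      · rw [mul_left_comm (∏ q : P, Eh q (γ q)) (algebraMap ℝ (Algebra.adjoin ℝ gens) μ)
            (Eh p μ), hPh_kill γ p μ hμ, mul_zero, zero_mul]
    -- matrix-level facts
    have hPrM_herm : ∀ γ : P → ℝ, (∏ q : P, Eh q (γ q)).val.IsHermitian := by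
      intro γ
      refine Finset.prod_induction (fun q => Eh q (γ q))
        (fun x : Algebra.adjoin ℝ gens => x.val.IsHermitian) ?_ ?_ (fun q _ => ?_)
      · intro a b ha hb
        show (a * b).val.conjTranspose = (a * b).val
        calc (a * b).val.conjTranspose
            = b.val.conjTranspose * a.val.conjTranspose := by
              rw [coe_mul, Matrix.conjTranspose_mul]
          _ = (b * a).val := by rw [ha, hb, coe_mul]
          _ = (a * b).val := by rw [mul_comm b a]
      · show (1 : Algebra.adjoin ℝ gens).val.IsHermitian
        rw [coe_one]; exact Matrix.isHermitian_one
      · exact sproj_conjTranspose (hMpherm q) (γ q)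
    have hPrM_comm : ∀ (γ : P → ℝ) s p,
        (∏ q : P, Eh q (γ q)).val * M s p = M s p * (∏ q : P, Eh q (γ q)).val := by
      intro γ s p
      refine Finset.prod_induction (fun q => Eh q (γ q))
        (fun x : Algebra.adjoin ℝ gens => x.val * M s p = M s p * x.val) ?_ ?_ (fun q _ => ?_)
      · intro a b ha hb
        show (a * b).val * M s p = M s p * (a * b).val
        rw [coe_mul, mul_assoc, hb, ← mul_assoc, ha, mul_assoc]
      · show (1 : Algebra.adjoin ℝ gens).val * M s p = M s p * (1 : Algebra.adjoin ℝ gens).val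
        rw [coe_one, one_mul, mul_one]
      · exact (hME s p q (γ q)).symm
    -- assemble
    let PrM : (P → ℝ) → Matrix (Fin d) (Fin d) ℂ := fun γ => (∏ q : P, Eh q (γ q)).val
    let Γ : Finset (P → ℝ) := (Fintype.piFinset T).filter fun γ => PrM γ ≠ 0
    let e : Γ ≃ Fin Γ.card := Γ.equivFin
    refine ⟨Γ.card, fun l => PrM ((e.symm l : Γ) : P → ℝ), ?_, ?_, ?_, ?_, ?_, ?_, ?_⟩
    · intro l
      exact (Finset.mem_filter.mp (e.symm l).2).2
    · intro l
      exact hPrM_herm _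
    · intro l
      show PrM _ * PrM _ = PrM _
      exact (coe_mul _ _).symm.trans (congrArg Subtype.val (hPh_idem _))
    · intro l l' hll'
      have hγ : ((e.symm l : Γ) : P → ℝ) ≠ ((e.symm l' : Γ) : P → ℝ) := by
        intro h
        exact hll' (e.symm.injective (Subtype.ext h))
      show PrM _ * PrM _ = 0
      exact (coe_mul _ _).symm.trans (congrArg Subtype.val (hPh_orth _ _ hγ))
    · -- sum equals one
      calc ∑ l, PrM ((e.symm l : Γ) : P → ℝ)
          = ∑ x : Γ, PrM (x : P → ℝ) :=
            (Fintype.sum_equiv e (fun x : Γ => PrM (x : P → ℝ))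
              (fun l => PrM ((e.symm l : Γ) : P → ℝ))
              (fun x => by simp only [Equiv.symm_apply_apply])).symm
        _ = ∑ γ ∈ Γ, PrM γ := Finset.sum_coe_sort Γ PrM
        _ = ∑ γ ∈ Fintype.piFinset T, PrM γ := Finset.sum_filter_ne_zero _
        _ = (∑ γ ∈ Fintype.piFinset T, ∏ q : P, Eh q (γ q)).val :=
            (coe_sumP (Fintype.piFinset T) (fun γ => ∏ q : P, Eh q (γ q))).symm
        _ = 1 := by rw [hPh_sum, coe_one]
    · intro s p l
      exact hPrM_comm _ s p
    · intro p l
      have hγpi : ((e.symm l : Γ) : P → ℝ) ∈ Fintype.piFinset T :=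
        (Finset.mem_filter.mp (e.symm l).2).1
      have hmem : ((e.symm l : Γ) : P → ℝ) p ∈ T p := Fintype.mem_piFinset.mp hγpi p
      obtain ⟨i, _, hi⟩ := Finset.mem_image.mp hmem
      refine ⟨((e.symm l : Γ) : P → ℝ) p, ?_, ?_, ?_⟩
      · rw [← hi]; exact (hMpPSD p).eigenvalues_nonneg i
      · rw [← hi]; exact eig_le_one (hMpherm p) (honeSub p) i
      · calc PrM ((e.symm l : Γ) : P → ℝ) * (∑ s : S, M s p) * PrM ((e.symm l : Γ) : P → ℝ)
            = ((∏ q : P, Eh q (((e.symm l : Γ) : P → ℝ) q))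
                * (∑ μ ∈ T p, algebraMap ℝ (Algebra.adjoin ℝ gens) μ * Eh p μ)
                * (∏ q : P, Eh q (((e.symm l : Γ) : P → ℝ) q))).val := by
              rw [coe_mul, coe_mul, hMh_coe p]
          _ = (algebraMap ℝ (Algebra.adjoin ℝ gens) (((e.symm l : Γ) : P → ℝ) p)
                * ∏ q : P, Eh q (((e.symm l : Γ) : P → ℝ) q)).val := by
              rw [hPh_comp _ hγpi p]
          _ = ((((e.symm l : Γ) : P → ℝ) p : ℂ)) • PrM ((e.symm l : Γ) : P → ℝ) :=
              algebraMap_mul_val _ _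
end

section
/- For every ε ∈ [0,1] and every positive semidefinite matrix ρ on ℂ^d, Tr(ρ·∇W_ε(ρ)) = W_ε(ρ); in other words, the scalar W_ε(ρ) − Tr(∇W_ε(ρ)·ρ) appearing as the constant term of the linearization operator O_ε := (W_ε(ρ) − Tr[∇W_ε(ρ)·ρ])·𝟙 + ∇W_ε(ρ) always vanishes. -/
open Matrix
open scoped Kronecker Classical ComplexOrder

/-- Von Neumann entropy (base-2) of a matrix, defined via its eigenvalues when it is Hermitian
(with the convention `0 · log₂ 0 = 0`), and `0` otherwise. -/
noncomputable def entH {n : Type*} [Fintype n] [DecidableEq n] (A : Matrix n n ℂ) : ℝ :=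
  if h : A.IsHermitian then -∑ i, h.eigenvalues i * Real.logb 2 (h.eigenvalues i) else 0

/-- The positive semidefinite square root of a positive semidefinite matrix
(junk value `0` on non-PSD input). -/
noncomputable def msqrt {n : Type*} [Fintype n] [DecidableEq n] (A : Matrix n n ℂ) :
    Matrix n n ℂ :=
  if h : A.PosSemidef then
    (h.1.eigenvectorUnitary : Matrix n n ℂ) *
      Matrix.diagonal ((↑) ∘ (fun x : ℝ => Real.sqrt x) ∘ h.1.eigenvalues) *
      (star h.1.eigenvectorUnitary : Matrix n n ℂ)
  else 0

/-- The objective function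
`W(ρ) = ∑_{s,p} H(K_{sp} ρ K_{sp}) − ∑_p H(K_p ρ K_p)` with `K_{sp} = √(M s p)` and
`K_p = √(∑_s M s p)`. -/
noncomputable def objW {n : Type*} [Fintype n] [DecidableEq n] {S P : Type*}
    [Fintype S] [Fintype P]
    (M : S → P → Matrix n n ℂ) (ρ : Matrix n n ℂ) : ℝ :=
  (∑ s : S, ∑ p : P, entH (msqrt (M s p) * ρ * msqrt (M s p))) -
    ∑ p : P, entH (msqrt (∑ s : S, M s p) * ρ * msqrt (∑ s : S, M s p))

/-- Functional calculus for Hermitian matrices: apply `f` to the eigenvalues. Returns `0` on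
non-Hermitian input. -/
noncomputable def herFun {n : Type*} [Fintype n] [DecidableEq n] (f : ℝ → ℝ)
    (A : Matrix n n ℂ) : Matrix n n ℂ :=
  if h : A.IsHermitian then
    (h.eigenvectorUnitary : Matrix n n ℂ) *
      Matrix.diagonal (fun i => (f (h.eigenvalues i) : ℂ)) *
      ((h.eigenvectorUnitary : Matrix n n ℂ))ᴴ
  else 0

/-- Base-2 matrix logarithm on the support of a Hermitian matrix (`log₂ 0 := 0`). -/
noncomputable def matLog2 {n : Type*} [Fintype n] [DecidableEq n] (A : Matrix n n ℂ) :
    Matrix n n ℂ :=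
  herFun (Real.logb 2) A

/-- The depolarizing map `D_ε(X) = (1−ε)·X + ε·Tr(X)·𝟙/d` (also its adjoint `D*_ε`). -/
noncomputable def depol {n : Type*} [Fintype n] [DecidableEq n] (ε : ℝ)
    (A : Matrix n n ℂ) : Matrix n n ℂ :=
  ((1 - ε : ℝ) : ℂ) • A + ((ε : ℂ) * A.trace / (Fintype.card n : ℂ)) • (1 : Matrix n n ℂ)

/-- The perturbed objective function
`W_ε(ρ) = ∑_{s,p} H(D_ε(K_{sp} ρ K_{sp})) − ∑_p H(D_ε(K_p ρ K_p))`. -/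
noncomputable def objWpert {n : Type*} [Fintype n] [DecidableEq n] {S P : Type*}
    [Fintype S] [Fintype P] (ε : ℝ)
    (M : S → P → Matrix n n ℂ) (ρ : Matrix n n ℂ) : ℝ :=
  (∑ s : S, ∑ p : P, entH (depol ε (msqrt (M s p) * ρ * msqrt (M s p)))) -
    ∑ p : P, entH (depol ε (msqrt (∑ s : S, M s p) * ρ * msqrt (∑ s : S, M s p)))

/-- The gradient of the perturbed objective function:
`∇W_ε(ρ) = −∑_{s,p} K_{sp}·D*_ε(log₂ D_ε(K_{sp} ρ K_{sp}))·K_{sp}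
           + ∑_p K_p·D*_ε(log₂ D_ε(K_p ρ K_p))·K_p`. -/
noncomputable def gradWpert {n : Type*} [Fintype n] [DecidableEq n] {S P : Type*}
    [Fintype S] [Fintype P] (ε : ℝ)
    (M : S → P → Matrix n n ℂ) (ρ : Matrix n n ℂ) : Matrix n n ℂ :=
  -(∑ s : S, ∑ p : P,
      msqrt (M s p) * depol ε (matLog2 (depol ε (msqrt (M s p) * ρ * msqrt (M s p)))) *
        msqrt (M s p)) +
    ∑ p : P,
      msqrt (∑ s : S, M s p) *
        depol ε (matLog2 (depol ε (msqrt (∑ s : S, M s p) * ρ * msqrt (∑ s : S, M s p)))) *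
        msqrt (∑ s : S, M s p)

section Aux
variable {n : Type*} [Fintype n] [DecidableEq n]

lemma trace_mul_herFun (f : ℝ → ℝ) (hf : f 0 = 0) {A : Matrix n n ℂ} (hA : A.IsHermitian) :
    (A * herFun f A).trace = ∑ i, ((hA.eigenvalues i : ℂ) * (f (hA.eigenvalues i) : ℂ)) := by
  have e := hA.spectral_theorem
  rw [Unitary.conjStarAlgAut_apply] at e
  have hU : (star (hA.eigenvectorUnitary : Matrix n n ℂ)) * (hA.eigenvectorUnitary : Matrix n n ℂ) = 1 :=
    (Matrix.mem_unitaryGroup_iff').mp hA.eigenvectorUnitary.2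
  set U : Matrix n n ℂ := (hA.eigenvectorUnitary : Matrix n n ℂ) with hUdef
  set D1 : Matrix n n ℂ := Matrix.diagonal (RCLike.ofReal ∘ hA.eigenvalues) with hD1
  set D2 : Matrix n n ℂ := Matrix.diagonal (fun i => (f (hA.eigenvalues i) : ℂ)) with hD2
  have hstar : Uᴴ = star U := rfl
  rw [herFun, dif_pos hA, ← hUdef, ← hD2, hstar]
  calc (A * (U * D2 * star U)).trace
      = ((U * D1 * star U) * (U * D2 * star U)).trace := by rw [← e]
    _ = (U * (D1 * D2) * star U).trace := by
        rw [Matrix.mul_assoc, Matrix.mul_assoc, Matrix.mul_assoc, Matrix.mul_assoc]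
        congr 2
        rw [← Matrix.mul_assoc (star U), hU, Matrix.one_mul, Matrix.mul_assoc]
    _ = (D1 * D2).trace := by
        rw [Matrix.trace_mul_cycle, ← Matrix.mul_assoc, hU, Matrix.one_mul]
    _ = ∑ i, ((hA.eigenvalues i : ℂ) * (f (hA.eigenvalues i) : ℂ)) := by
        rw [hD1, hD2, Matrix.diagonal_mul_diagonal, Matrix.trace_diagonal]
        rfl

lemma isHermitian_depol {ε : ℝ} {A : Matrix n n ℂ} (hA : A.IsHermitian) :
    (depol ε A).IsHermitian := by
  have htr : star A.trace = A.trace := by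
    conv_rhs => rw [← hA.eq]
    rw [Matrix.trace_conjTranspose]
  unfold Matrix.IsHermitian depol
  rw [Matrix.conjTranspose_add, Matrix.conjTranspose_smul, Matrix.conjTranspose_smul,
    Matrix.conjTranspose_one, hA.eq]
  congr 1
  · congr 1
    exact Complex.conj_ofReal _
  · congr 1
    rw [star_div₀, star_mul', htr, star_natCast]
    congr 2
    exact Complex.conj_ofReal _

lemma trace_depol_mul (ε : ℝ) (X Y : Matrix n n ℂ) :
    (X * depol ε Y).trace = (depol ε X * Y).trace := by
  simp only [depol, Matrix.mul_add, Matrix.add_mul, Matrix.trace_add, Matrix.mul_smul,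
    Matrix.smul_mul, Matrix.trace_smul, Matrix.mul_one, Matrix.one_mul, smul_eq_mul,
    Matrix.trace_one]
  ring

lemma entH_eq {A : Matrix n n ℂ} (hA : A.IsHermitian) :
    (A * matLog2 A).trace = -(entH A : ℂ) := by
  rw [matLog2, trace_mul_herFun (Real.logb 2) (Real.logb_zero) hA, entH, dif_pos hA]
  push_cast
  ring

lemma key_trace (ε : ℝ) (ρ : Matrix n n ℂ) (hρ : ρ.IsHermitian)
    {K : Matrix n n ℂ} (hK : K.IsHermitian) :
    (ρ * (K * depol ε (matLog2 (depol ε (K * ρ * K))) * K)).trace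
      = -(entH (depol ε (K * ρ * K)) : ℂ) := by
  have hA : (K * ρ * K).IsHermitian := by
    unfold Matrix.IsHermitian
    rw [Matrix.conjTranspose_mul, Matrix.conjTranspose_mul, hK.eq, hρ.eq, Matrix.mul_assoc]
  have hD : (depol ε (K * ρ * K)).IsHermitian := isHermitian_depol hA
  calc (ρ * (K * depol ε (matLog2 (depol ε (K * ρ * K))) * K)).trace
      = ((K * ρ * K) * depol ε (matLog2 (depol ε (K * ρ * K)))).trace := by
        rw [← Matrix.mul_assoc, ← Matrix.mul_assoc, Matrix.trace_mul_cycle,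
          ← Matrix.mul_assoc]
    _ = (depol ε (K * ρ * K) * matLog2 (depol ε (K * ρ * K))).trace := trace_depol_mul ..
    _ = -(entH (depol ε (K * ρ * K)) : ℂ) := entH_eq hD

lemma msqrt_isHermitian {A : Matrix n n ℂ} (hA : A.PosSemidef) : (msqrt A).IsHermitian := by
  rw [msqrt, dif_pos hA]; exact isHermitian_mul_mul_conjTranspose _
    (isHermitian_diagonal_of_self_adjoint _ (funext fun i => Complex.conj_ofReal _))

end Aux

/-- the constant term of the linearization always vanishes:
`Tr(ρ · ∇W_ε(ρ)) = W_ε(ρ)`. -/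
theorem stmt_7 {d : ℕ} (hd : 1 ≤ d) {S P : Type*}
    [Fintype S] [Nonempty S] [Fintype P] [Nonempty P]
    (M : S → P → Matrix (Fin d) (Fin d) ℂ)
    (hMpsd : ∀ s p, (M s p).PosSemidef)
    (hMsum : ∑ s : S, ∑ p : P, M s p = 1)
    (ε : ℝ) (hε : ε ∈ Set.Icc (0 : ℝ) 1)
    (ρ : Matrix (Fin d) (Fin d) ℂ) (hρ : ρ.PosSemidef) :
    (ρ * gradWpert ε M ρ).trace = (objWpert ε M ρ : ℂ) := by
  have hρh := hρ.isHermitian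
  unfold gradWpert objWpert
  rw [Matrix.mul_add, Matrix.trace_add, Matrix.mul_neg, Matrix.trace_neg,
    Finset.mul_sum, Matrix.trace_sum, Finset.mul_sum, Matrix.trace_sum]
  have h1 : ∀ s p, (ρ * (msqrt (M s p) * depol ε (matLog2 (depol ε (msqrt (M s p) * ρ * msqrt (M s p)))) * msqrt (M s p))).trace
      = -(entH (depol ε (msqrt (M s p) * ρ * msqrt (M s p))) : ℂ) := fun s p =>
    key_trace ε ρ hρh (msqrt_isHermitian (hMpsd s p))
  have h2 : ∀ p, (ρ * (msqrt (∑ s : S, M s p) * depol ε (matLog2 (depol ε (msqrt (∑ s : S, M s p) * ρ * msqrt (∑ s : S, M s p)))) * msqrt (∑ s : S, M s p))).trace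
      = -(entH (depol ε (msqrt (∑ s : S, M s p) * ρ * msqrt (∑ s : S, M s p))) : ℂ) := fun p =>
    key_trace ε ρ hρh (msqrt_isHermitian (Finset.sum_induction _ _ (fun a b ha hb => ha.add hb) (Matrix.PosSemidef.zero) (fun s _ => hMpsd s p)))
  simp only [Finset.mul_sum, Matrix.trace_sum, h2]
  have h1' : ∀ s, ∑ p : P, (ρ * (msqrt (M s p) * depol ε (matLog2 (depol ε (msqrt (M s p) * ρ * msqrt (M s p)))) * msqrt (M s p))).trace
      = ∑ p : P, -(entH (depol ε (msqrt (M s p) * ρ * msqrt (M s p))) : ℂ) :=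
    fun s => Finset.sum_congr rfl (fun p _ => h1 s p)
  simp only [h1']
  simp only [Finset.sum_neg_distrib, neg_neg]
  push_cast
  ring
end

section
/- Let c_0 ≥ 0, c_1 > 0, and let X be a finite nonempty set. Define E : ℝ^X → ℝ∪{+∞} by E(λ) := −√(c_0² − ‖λ‖₁²/(4c_1²)) if ∑_{x∈X} λ(x) = 0 and ‖λ‖₁ ≤ 2·c_0·c_1, and E(λ) := +∞ otherwise, where ‖λ‖₁ := ∑_{x∈X} |λ(x)|. Then E is convex, and its Fenchel conjugate satisfies E*(f) = c_0·√(1 + c_1²·(max_{x∈X} f(x) − min_{x∈X} f(x))²) for every f ∈ ℝ^X; equivalently, sup{ ⟨λ, f⟩ + √(c_0² − ‖λ‖₁²/(4c_1²)) : λ ∈ ℝ^X, ∑_x λ(x) = 0, ‖λ‖₁ ≤ 2·c_0·c_1 } = c_0·√(1 + c_1²·(max f − min f)²). -/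
lemma aux_sq_le {x y : ℝ} (hx : 0 ≤ x) (hy : 0 ≤ y) (h : x^2 ≤ y^2) : x ≤ y := by
  nlinarith [sq_nonneg (x - y), sq_nonneg (x + y)]

lemma aux_key (c0 : ℝ) {u v a b : ℝ} (hu0 : 0 ≤ u) (hu : u ≤ c0) (hv0 : 0 ≤ v)
    (hv : v ≤ c0) (ha : 0 ≤ a) (hb : 0 ≤ b) (hab : a + b = 1) :
    a * Real.sqrt (c0^2 - u^2) + b * Real.sqrt (c0^2 - v^2)
      ≤ Real.sqrt (c0^2 - (a*u+b*v)^2) := by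
  have hc0 : 0 ≤ c0 := le_trans hu0 hu
  set p := Real.sqrt (c0^2 - u^2) with hpdef
  set q := Real.sqrt (c0^2 - v^2) with hqdef
  have hp0 : 0 ≤ p := Real.sqrt_nonneg _
  have hq0 : 0 ≤ q := Real.sqrt_nonneg _
  have hp2 : p^2 = c0^2 - u^2 := Real.sq_sqrt (by nlinarith)
  have hq2 : q^2 = c0^2 - v^2 := Real.sq_sqrt (by nlinarith)
  have hpq : p * q ≤ c0^2 - u*v := by
    apply aux_sq_le (mul_nonneg hp0 hq0) (by nlinarith)
    nlinarith [mul_nonneg (sq_nonneg c0) (sq_nonneg (u - v))]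
  have hw0 : 0 ≤ a*u + b*v := by positivity
  have hw1 : a*u + b*v ≤ c0 := by nlinarith
  apply aux_sq_le (by positivity) (Real.sqrt_nonneg _)
  rw [Real.sq_sqrt (by nlinarith)]
  have e : (a*p+b*q)^2 = a^2*(c0^2-u^2) + b^2*(c0^2-v^2) + 2*(a*b)*(p*q) := by
    rw [← hp2, ← hq2]; ring
  have e2 : a^2*(c0^2-u^2) + b^2*(c0^2-v^2) + 2*(a*b)*(c0^2-u*v)
      = c0^2 - (a*u+b*v)^2 := by
    have hb' : b = 1 - a := by linarith
    rw [hb']; ring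
  have e3 : 2*(a*b)*(p*q) ≤ 2*(a*b)*(c0^2-u*v) :=
    mul_le_mul_of_nonneg_left hpq (by positivity)
  linarith

lemma aux_div (c1 : ℝ) (hc1 : 0 < c1) (W : ℝ) : W^2/(4*c1^2) = (W/(2*c1))^2 := by
  rw [div_pow]; congr 1; ring

lemma aux_conv (c0 c1 : ℝ) (hc0 : 0 ≤ c0) (hc1 : 0 < c1) {U V S a b : ℝ}
    (hU0 : 0 ≤ U) (hU : U ≤ 2*c0*c1) (hV0 : 0 ≤ V) (hV : V ≤ 2*c0*c1)
    (hS0 : 0 ≤ S) (hS : S ≤ a*U + b*V) (ha : 0 ≤ a) (hb : 0 ≤ b) (hab : a+b=1) :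
    -Real.sqrt (c0^2 - S^2/(4*c1^2))
      ≤ a * -Real.sqrt (c0^2 - U^2/(4*c1^2)) + b * -Real.sqrt (c0^2 - V^2/(4*c1^2)) := by
  rw [aux_div c1 hc1 U, aux_div c1 hc1 V, aux_div c1 hc1 S]
  set u := U/(2*c1) with hudef
  set v := V/(2*c1) with hvdef
  set s := S/(2*c1) with hsdef
  have hu0 : 0 ≤ u := by positivity
  have hv0 : 0 ≤ v := by positivity
  have hs0 : 0 ≤ s := by positivity
  have hu : u ≤ c0 := by rw [hudef, div_le_iff₀ (by positivity)]; linarith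
  have hv : v ≤ c0 := by rw [hvdef, div_le_iff₀ (by positivity)]; linarith
  have hs : s ≤ a*u + b*v := by
    rw [hsdef, hudef, hvdef, div_le_iff₀ (by positivity)]
    have e : a*(U/(2*c1)) + b*(V/(2*c1)) = (a*U+b*V)/(2*c1) := by ring
    rw [e, div_mul_cancel₀ _ (by positivity : (2*c1 : ℝ) ≠ 0)]
    exact hS
  have h1 : a * Real.sqrt (c0^2 - u^2) + b * Real.sqrt (c0^2 - v^2)
      ≤ Real.sqrt (c0^2 - (a*u+b*v)^2) := aux_key c0 hu0 hu hv0 hv ha hb hab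
  have h2 : Real.sqrt (c0^2 - (a*u+b*v)^2) ≤ Real.sqrt (c0^2 - s^2) := by
    apply Real.sqrt_le_sqrt
    nlinarith
  linarith

lemma aux_ub (c0 c1 D T : ℝ) (hc0 : 0 ≤ c0) (hc1 : 0 < c1) (hD : 0 ≤ D)
    (hT0 : 0 ≤ T) (hT : T ≤ 2 * c0 * c1) :
    T * D / 2 + Real.sqrt (c0^2 - T^2 / (4 * c1^2))
      ≤ c0 * Real.sqrt (1 + c1^2 * D^2) := by
  set s := T / (2 * c1) with hsdef
  have hs0 : 0 ≤ s := by positivity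
  have hsc : s ≤ c0 := by rw [hsdef, div_le_iff₀ (by positivity)]; nlinarith
  have harg : c0^2 - T^2 / (4 * c1^2) = c0^2 - s^2 := by
    rw [hsdef]; field_simp; ring
  rw [harg]
  set p := Real.sqrt (c0^2 - s^2) with hpdef
  have hp0 : 0 ≤ p := Real.sqrt_nonneg _
  have hp2 : p^2 = c0^2 - s^2 := Real.sq_sqrt (by nlinarith)
  set R := Real.sqrt (1 + c1^2 * D^2) with hRdef
  have hR0 : 0 ≤ R := Real.sqrt_nonneg _
  have hR2 : R^2 = 1 + c1^2 * D^2 := Real.sq_sqrt (by positivity)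
  have hTs : T = 2 * c1 * s := by rw [hsdef]; field_simp
  rw [hTs]
  apply aux_sq_le (by positivity) (by positivity)
  nlinarith [sq_nonneg (s - c1 * D * p), mul_nonneg (mul_nonneg hs0 hc1.le) hD]

lemma aux_val (c0 c1 D : ℝ) (hc0 : 0 ≤ c0) (hc1 : 0 < c1) (hD : 0 ≤ D) :
    (2*c0*c1^2*D/Real.sqrt (1+c1^2*D^2)) * D / 2
      + Real.sqrt (c0^2 - (2*c0*c1^2*D/Real.sqrt (1+c1^2*D^2))^2/(4*c1^2))
      = c0 * Real.sqrt (1+c1^2*D^2) := by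
  set R := Real.sqrt (1+c1^2*D^2) with hRdef
  have hRpos : 0 < R := Real.sqrt_pos.mpr (by positivity)
  have hR2 : R^2 = 1 + c1^2*D^2 := Real.sq_sqrt (by positivity)
  have h1 : (2*c0*c1^2*D/R)^2/(4*c1^2) = c0^2*(c1^2*D^2)/R^2 := by
    rw [div_pow]; field_simp; ring
  have harg : c0^2 - (2*c0*c1^2*D/R)^2/(4*c1^2) = (c0/R)^2 := by
    rw [h1, div_pow, hR2]
    have h2 : (1:ℝ) + c1^2*D^2 ≠ 0 := by positivity
    field_simp
    ring
  rw [harg, Real.sqrt_sq (by positivity)]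
  field_simp
  linear_combination (-c0) * hR2

lemma aux_tle (c0 c1 D : ℝ) (hc0 : 0 ≤ c0) (hc1 : 0 < c1) (hD : 0 ≤ D) :
    2*c0*c1^2*D/Real.sqrt (1+c1^2*D^2) ≤ 2*c0*c1 := by
  set R := Real.sqrt (1+c1^2*D^2) with hRdef
  have hRpos : 0 < R := Real.sqrt_pos.mpr (by positivity)
  have hR2 : R^2 = 1 + c1^2*D^2 := Real.sq_sqrt (by positivity)
  have hcd : c1*D ≤ R := by
    nlinarith [sq_nonneg (c1*D - R), sq_nonneg (c1*D + R)]
  rw [div_le_iff₀ hRpos]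
  nlinarith [mul_le_mul_of_nonneg_left hcd (by positivity : (0:ℝ) ≤ 2*c0*c1)]

lemma aux_abs_sum {X : Type*} [Fintype X] (l m : X → ℝ) (a b : ℝ)
    (ha : 0 ≤ a) (hb : 0 ≤ b) :
    ∑ x : X, |(a • l + b • m) x| ≤ a * (∑ x : X, |l x|) + b * (∑ x : X, |m x|) := by
  rw [Finset.mul_sum, Finset.mul_sum, ← Finset.sum_add_distrib]
  apply Finset.sum_le_sum
  intro x _
  simp only [Pi.add_apply, Pi.smul_apply, smul_eq_mul]
  calc |a * l x + b * m x| ≤ |a * l x| + |b * m x| := abs_add_le _ _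
    _ = a * |l x| + b * |m x| := by
        rw [abs_mul, abs_mul, abs_of_nonneg ha, abs_of_nonneg hb]

/-- the function `E(λ) = −√(c₀² − ‖λ‖₁²/(4c₁²))` on the domain
`{λ : ∑_x λ(x) = 0, ‖λ‖₁ ≤ 2c₀c₁}` (and `+∞` outside it) is convex, and its Fenchel conjugate
is `E*(f) = c₀·√(1 + c₁²·(max f − min f)²)`. -/
theorem stmt_14 {X : Type*} [Fintype X] [Nonempty X]
    (c0 c1 : ℝ) (hc0 : 0 ≤ c0) (hc1 : 0 < c1) :
    ConvexOn ℝ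
      {l : X → ℝ | (∑ x : X, l x) = 0 ∧ (∑ x : X, |l x|) ≤ 2 * c0 * c1}
      (fun l => -Real.sqrt (c0 ^ 2 - (∑ x : X, |l x|) ^ 2 / (4 * c1 ^ 2))) ∧
    ∀ f : X → ℝ,
      sSup {z : ℝ | ∃ l : X → ℝ, (∑ x : X, l x) = 0 ∧ (∑ x : X, |l x|) ≤ 2 * c0 * c1 ∧
          z = (∑ x : X, l x * f x) +
            Real.sqrt (c0 ^ 2 - (∑ x : X, |l x|) ^ 2 / (4 * c1 ^ 2))} =
        c0 * Real.sqrt (1 + c1 ^ 2 *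
          (Finset.univ.sup' Finset.univ_nonempty f -
            Finset.univ.inf' Finset.univ_nonempty f) ^ 2) := by
  classical
  constructor
  · constructor
    · intro l hl m hm a b ha hb hab
      obtain ⟨hl1, hl2⟩ := hl
      obtain ⟨hm1, hm2⟩ := hm
      constructor
      · simp only [Pi.add_apply, Pi.smul_apply, smul_eq_mul]
        rw [Finset.sum_add_distrib, ← Finset.mul_sum, ← Finset.mul_sum, hl1, hm1]
        ring
      · calc ∑ x : X, |(a • l + b • m) x|
            ≤ a * (∑ x : X, |l x|) + b * (∑ x : X, |m x|) := aux_abs_sum l m a b ha hb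
          _ ≤ a * (2*c0*c1) + b * (2*c0*c1) :=
              add_le_add (mul_le_mul_of_nonneg_left hl2 ha)
                (mul_le_mul_of_nonneg_left hm2 hb)
          _ = 2 * c0 * c1 := by rw [← add_mul, hab, one_mul]
    · intro l hl m hm a b ha hb hab
      obtain ⟨hl1, hl2⟩ := hl
      obtain ⟨hm1, hm2⟩ := hm
      simp only [smul_eq_mul]
      have hU0 : 0 ≤ ∑ x : X, |l x| := Finset.sum_nonneg fun x _ => abs_nonneg _
      have hV0 : 0 ≤ ∑ x : X, |m x| := Finset.sum_nonneg fun x _ => abs_nonneg _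
      have hS0 : 0 ≤ ∑ x : X, |(a • l + b • m) x| :=
        Finset.sum_nonneg fun x _ => abs_nonneg _
      exact aux_conv c0 c1 hc0 hc1 hU0 hl2 hV0 hm2 hS0 (aux_abs_sum l m a b ha hb) ha hb hab
  · intro f
    set M := Finset.univ.sup' Finset.univ_nonempty f with hMdef
    set m := Finset.univ.inf' Finset.univ_nonempty f with hmdef
    have hfM : ∀ x, f x ≤ M := fun x => Finset.le_sup' f (Finset.mem_univ x)
    have hmf : ∀ x, m ≤ f x := fun x => Finset.inf'_le f (Finset.mem_univ x)
    set D := M - m with hDdef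
    have hD : 0 ≤ D := by
      obtain ⟨x0⟩ := (inferInstance : Nonempty X)
      have h1 := hfM x0; have h2 := hmf x0
      rw [hDdef]; linarith
    set R := Real.sqrt (1 + c1 ^ 2 * D ^ 2) with hRdef
    have hRpos : 0 < R := Real.sqrt_pos.mpr (by positivity)
    have hR2 : R ^ 2 = 1 + c1 ^ 2 * D ^ 2 := Real.sq_sqrt (by positivity)
    have hub : ∀ z ∈ {z : ℝ | ∃ l : X → ℝ, (∑ x : X, l x) = 0 ∧
        (∑ x : X, |l x|) ≤ 2 * c0 * c1 ∧
        z = (∑ x : X, l x * f x) +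
          Real.sqrt (c0 ^ 2 - (∑ x : X, |l x|) ^ 2 / (4 * c1 ^ 2))}, z ≤ c0 * R := by
      rintro z ⟨l, hl1, hl2, rfl⟩
      have hT0 : 0 ≤ ∑ x : X, |l x| := Finset.sum_nonneg fun x _ => abs_nonneg _
      have hdot : ∑ x : X, l x * f x ≤ (∑ x : X, |l x|) * D / 2 := by
        have e1 : ∑ x : X, l x * (f x - (M+m)/2)
            = (∑ x : X, l x * f x) - (∑ x : X, l x) * ((M+m)/2) := by
          rw [Finset.sum_mul, ← Finset.sum_sub_distrib]
          exact Finset.sum_congr rfl fun x _ => by ring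
        have e2 : ∑ x : X, l x * f x = ∑ x : X, l x * (f x - (M+m)/2) := by
          rw [e1, hl1, zero_mul, sub_zero]
        rw [e2]
        calc ∑ x : X, l x * (f x - (M+m)/2) ≤ ∑ x : X, |l x| * (D/2) := by
              apply Finset.sum_le_sum
              intro x _
              have h1 : l x * (f x - (M+m)/2) ≤ |l x| * |f x - (M+m)/2| := by
                rw [← abs_mul]; exact le_abs_self _
              have h2 : |f x - (M+m)/2| ≤ D/2 := by
                rw [abs_le, hDdef]
                constructor
                · have := hmf x; linarith
                · have := hfM x; linarith
              calc l x * (f x - (M+m)/2) ≤ |l x| * |f x - (M+m)/2| := h1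
                _ ≤ |l x| * (D/2) := mul_le_mul_of_nonneg_left h2 (abs_nonneg _)
          _ = (∑ x : X, |l x|) * D / 2 := by rw [← Finset.sum_mul]; ring
      have hmain := aux_ub c0 c1 D (∑ x : X, |l x|) hc0 hc1 hD hT0 hl2
      linarith
    have hmem : c0 * R ∈ {z : ℝ | ∃ l : X → ℝ, (∑ x : X, l x) = 0 ∧
        (∑ x : X, |l x|) ≤ 2 * c0 * c1 ∧
        z = (∑ x : X, l x * f x) +
          Real.sqrt (c0 ^ 2 - (∑ x : X, |l x|) ^ 2 / (4 * c1 ^ 2))} := by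
      by_cases hD0 : D = 0
      · refine ⟨0, by simp, by simp; positivity, ?_⟩
        have e0 : ∀ x : X, |(0 : X → ℝ) x| = 0 := fun x => by simp
        rw [hRdef, hD0]
        simp [Real.sqrt_sq hc0]
      · set t := 2*c0*c1^2*D/R with htdef
        have ht0 : 0 ≤ t := by positivity
        have htle : t ≤ 2*c0*c1 := by
          have := aux_tle c0 c1 D hc0 hc1 hD
          rw [← hRdef] at this
          exact this
        obtain ⟨xp, -, hxp⟩ := Finset.exists_mem_eq_sup' Finset.univ_nonempty f
        obtain ⟨xm, -, hxm⟩ := Finset.exists_mem_eq_inf' Finset.univ_nonempty f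
        have hne : xp ≠ xm := by
          intro h
          apply hD0
          rw [hDdef, hMdef, hmdef, hxp, hxm, h]
          ring
        set l0 : X → ℝ :=
          fun x => (if x = xp then t/2 else 0) + (if x = xm then -(t/2) else 0) with hl0def
        have hsum0 : ∑ x : X, l0 x = 0 := by
          rw [hl0def]
          rw [Finset.sum_add_distrib, Finset.sum_ite_eq' Finset.univ xp fun _ => t/2,
            Finset.sum_ite_eq' Finset.univ xm fun _ => -(t/2)]
          simp
        have habs0 : ∑ x : X, |l0 x| = t := by
          have e : ∀ x : X, |l0 x|
              = (if x = xp then t/2 else 0) + (if x = xm then t/2 else 0) := by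
            intro x
            rw [hl0def]
            by_cases h1 : x = xp
            · have h2 : x ≠ xm := by rw [h1]; exact hne
              simp [h1, h2, hne, abs_of_nonneg (by positivity : (0:ℝ) ≤ t/2)]
            · by_cases h2 : x = xm
              · simp [h1, h2, Ne.symm hne, abs_of_nonneg (by positivity : (0:ℝ) ≤ t/2)]
              · simp [h1, h2]
          rw [Finset.sum_congr rfl fun x _ => e x]
          rw [Finset.sum_add_distrib, Finset.sum_ite_eq' Finset.univ xp fun _ => t/2,
            Finset.sum_ite_eq' Finset.univ xm fun _ => t/2]
          simp only [Finset.mem_univ, if_true]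
          ring
        have hdot0 : ∑ x : X, l0 x * f x = t * D / 2 := by
          rw [hl0def]
          simp only [add_mul, ite_mul, zero_mul, neg_mul]
          rw [Finset.sum_add_distrib, Finset.sum_ite_eq' Finset.univ xp fun x => t/2 * f x,
            Finset.sum_ite_eq' Finset.univ xm fun x => -(t/2 * f x)]
          simp only [Finset.mem_univ, if_true]
          rw [← hxp, ← hxm, hDdef]
          ring
        refine ⟨l0, hsum0, by rw [habs0]; exact htle, ?_⟩
        rw [habs0, hdot0]
        have hval := aux_val c0 c1 D hc0 hc1 hD
        rw [← hRdef] at hval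
        rw [← htdef] at hval
        exact hval.symm
    exact le_antisymm (csSup_le ⟨c0 * R, hmem⟩ hub)
      (le_csSup ⟨c0 * R, fun z hz => hub z hz⟩ hmem)
end
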